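/- Let c > 0 be constant, a ∈ ℝ, r₀ > 0 with Δ(r₀) > 0 where Δ(r) = r² − 2r + a². Let B, ρ, u : ℝ → ℝ be differentiable at r₀ with B(r₀) > 0, ρ(r₀) > 0, 0 < u(r₀) < 1. Define ξ(r) = ρ(r)^{c²}·√(Δ(r)/(B(r)(1−u(r)²))) and Ṁ(r) = ρ(r)·r·√(Δ(r))·u(r)/√(1−u(r)²). If ξ′(r₀) = 0 and Ṁ′(r₀) = 0, then at r = r₀: (u² − c²)·u′ = u(1−u²)·[ c²·(2r² − 3r + a²)/(Δ·r) + (1/2)·(B′/B − Δ′/Δ) ], where Δ′ = 2r − 2. -/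

import Mathlib

/-- Velocity-gradient equation for stationary isothermal conical accretion onto a Kerr
black hole: if `ξ = ρ^{c²}√(Δ/(B(1−u²)))` and `Ṁ = ρr√Δ·u/√(1−u²)` are stationary at
`r₀`, then `(u² − c²)·u′ = u(1−u²)·[c²(2r² − 3r + a²)/(Δr) + (1/2)(B′/B − Δ′/Δ)]`
at `r₀`. -/
theorem conical_isothermal_velocity_gradient (c a r₀ : ℝ) (hc : 0 < c) (hr : 0 < r₀)
    (Δ : ℝ → ℝ) (hΔdef : Δ = fun r => r ^ 2 - 2 * r + a ^ 2) (hΔpos : 0 < Δ r₀)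
    (B ρ u : ℝ → ℝ)
    (hB : DifferentiableAt ℝ B r₀) (hρ : DifferentiableAt ℝ ρ r₀)
    (hu : DifferentiableAt ℝ u r₀)
    (hB0 : 0 < B r₀) (hρ0 : 0 < ρ r₀) (hu0 : 0 < u r₀) (hu1 : u r₀ < 1)
    (ξ Mdot : ℝ → ℝ)
    (hξ : ξ = fun r => (ρ r) ^ (c ^ 2) * Real.sqrt (Δ r / (B r * (1 - (u r) ^ 2))))
    (hM : Mdot = fun r => ρ r * r * Real.sqrt (Δ r) * u r / Real.sqrt (1 - (u r) ^ 2))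
    (hξ' : deriv ξ r₀ = 0) (hM' : deriv Mdot r₀ = 0) :
    ((u r₀) ^ 2 - c ^ 2) * deriv u r₀ =
      u r₀ * (1 - (u r₀) ^ 2) *
        (c ^ 2 * (2 * r₀ ^ 2 - 3 * r₀ + a ^ 2) / (Δ r₀ * r₀) +
          (1 / 2) * (deriv B r₀ / B r₀ - (2 * r₀ - 2) / Δ r₀)) := by
  have hw0 : 0 < 1 - (u r₀) ^ 2 := by nlinarith
  have hΔder : HasDerivAt Δ (2 * r₀ - 2) r₀ := by
    rw [hΔdef]
    have h := ((hasDerivAt_pow 2 r₀).sub ((hasDerivAt_id r₀).const_mul 2)).add_const (a ^ 2)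
    exact h.congr_deriv (by simp)
  -- eventual positivity
  have evΔ : ∀ᶠ r in nhds r₀, 0 < Δ r :=
    hΔder.continuousAt.eventually (eventually_gt_nhds hΔpos)
  have evB : ∀ᶠ r in nhds r₀, 0 < B r :=
    hB.continuousAt.eventually (eventually_gt_nhds hB0)
  have evρ : ∀ᶠ r in nhds r₀, 0 < ρ r :=
    hρ.continuousAt.eventually (eventually_gt_nhds hρ0)
  have evu0 : ∀ᶠ r in nhds r₀, 0 < u r :=
    hu.continuousAt.eventually (eventually_gt_nhds hu0)
  have evu1 : ∀ᶠ r in nhds r₀, u r < 1 :=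
    hu.continuousAt.eventually (eventually_lt_nhds hu1)
  have evr : ∀ᶠ r in nhds r₀, 0 < r := eventually_gt_nhds hr
  -- log-derivative building blocks
  set dρ := deriv ρ r₀ with hdρ
  set dB := deriv B r₀ with hdB
  set du := deriv u r₀ with hdu
  have hlogρ : HasDerivAt (fun r => Real.log (ρ r)) (dρ / ρ r₀) r₀ :=
    (hρ.hasDerivAt).log hρ0.ne'
  have hlogB : HasDerivAt (fun r => Real.log (B r)) (dB / B r₀) r₀ :=
    (hB.hasDerivAt).log hB0.ne'
  have hlogΔ : HasDerivAt (fun r => Real.log (Δ r)) ((2 * r₀ - 2) / Δ r₀) r₀ :=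
    hΔder.log hΔpos.ne'
  have hlogu : HasDerivAt (fun r => Real.log (u r)) (du / u r₀) r₀ :=
    (hu.hasDerivAt).log hu0.ne'
  have hW : HasDerivAt (fun r => 1 - (u r) ^ 2) (-(2 * u r₀ * du)) r₀ := by
    have h := ((hu.hasDerivAt).pow 2).const_sub 1
    exact h.congr_deriv (by simp [hdu])
  have hlogW : HasDerivAt (fun r => Real.log (1 - (u r) ^ 2))
      (-(2 * u r₀ * du) / (1 - (u r₀) ^ 2)) r₀ := hW.log hw0.ne'
  have hlogr : HasDerivAt (fun r : ℝ => Real.log r) (1 / r₀) r₀ := by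
    have := (hasDerivAt_id r₀).log hr.ne'
    simpa using this
  -- ξ rewritten via exp/log
  have hξeq : ξ =ᶠ[nhds r₀] fun r => Real.exp (c ^ 2 * Real.log (ρ r) +
      (1 / 2) * (Real.log (Δ r) - Real.log (B r) - Real.log (1 - (u r) ^ 2))) := by
    filter_upwards [evΔ, evB, evρ, evu0, evu1] with r hΔr hBr hρr hur0 hur1
    have hwr : 0 < 1 - (u r) ^ 2 := by nlinarith
    have hden : 0 < B r * (1 - (u r) ^ 2) := by positivity
    rw [hξ]
    simp only
    rw [Real.rpow_def_of_pos hρr, Real.sqrt_eq_rpow,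
      Real.rpow_def_of_pos (by positivity : (0:ℝ) < Δ r / (B r * (1 - (u r) ^ 2))),
      Real.log_div hΔr.ne' hden.ne', Real.log_mul hBr.ne' hwr.ne', ← Real.exp_add]
    congr 1
    ring
  have hMeq : Mdot =ᶠ[nhds r₀] fun r => Real.exp (Real.log (ρ r) + Real.log r +
      (1 / 2) * Real.log (Δ r) + Real.log (u r) - (1 / 2) * Real.log (1 - (u r) ^ 2)) := by
    filter_upwards [evΔ, evρ, evu0, evu1, evr] with r hΔr hρr hur0 hur1 hrr
    have hwr : 0 < 1 - (u r) ^ 2 := by nlinarith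
    rw [hM]
    simp only
    rw [Real.exp_sub, Real.exp_add, Real.exp_add, Real.exp_add,
      Real.exp_log hρr, Real.exp_log hrr, Real.exp_log hur0,
      show Real.exp (1 / 2 * Real.log (Δ r)) = Real.sqrt (Δ r) by
        rw [Real.sqrt_eq_rpow, Real.rpow_def_of_pos hΔr]; ring_nf,
      show Real.exp (1 / 2 * Real.log (1 - (u r) ^ 2)) = Real.sqrt (1 - (u r) ^ 2) by
        rw [Real.sqrt_eq_rpow, Real.rpow_def_of_pos hwr]; ring_nf]
  -- derivative of the exp forms
  have hg1 : HasDerivAt (fun r => Real.exp (c ^ 2 * Real.log (ρ r) +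
      (1 / 2) * (Real.log (Δ r) - Real.log (B r) - Real.log (1 - (u r) ^ 2))))
      (Real.exp (c ^ 2 * Real.log (ρ r₀) +
        (1 / 2) * (Real.log (Δ r₀) - Real.log (B r₀) - Real.log (1 - (u r₀) ^ 2))) *
       (c ^ 2 * (dρ / ρ r₀) + (1 / 2) * ((2 * r₀ - 2) / Δ r₀ - dB / B r₀ -
          -(2 * u r₀ * du) / (1 - (u r₀) ^ 2)))) r₀ :=
    ((hlogρ.const_mul (c ^ 2)).add (((hlogΔ.sub hlogB).sub hlogW).const_mul (1 / 2))).exp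
  have hg2 : HasDerivAt (fun r => Real.exp (Real.log (ρ r) + Real.log r +
      (1 / 2) * Real.log (Δ r) + Real.log (u r) - (1 / 2) * Real.log (1 - (u r) ^ 2)))
      (Real.exp (Real.log (ρ r₀) + Real.log r₀ +
        (1 / 2) * Real.log (Δ r₀) + Real.log (u r₀) - (1 / 2) * Real.log (1 - (u r₀) ^ 2)) *
       (dρ / ρ r₀ + 1 / r₀ + (1 / 2) * ((2 * r₀ - 2) / Δ r₀) + du / u r₀ -
          (1 / 2) * (-(2 * u r₀ * du) / (1 - (u r₀) ^ 2)))) r₀ :=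
    ((((hlogρ.add hlogr).add (hlogΔ.const_mul (1 / 2))).add hlogu).sub
      (hlogW.const_mul (1 / 2))).exp
  -- extract the two scalar equations
  have E1 : c ^ 2 * (dρ / ρ r₀) + (1 / 2) * ((2 * r₀ - 2) / Δ r₀ - dB / B r₀ -
      -(2 * u r₀ * du) / (1 - (u r₀) ^ 2)) = 0 := by
    have h := hξeq.deriv_eq
    rw [hξ'] at h
    rw [hg1.deriv] at h
    have hexp := Real.exp_pos (c ^ 2 * Real.log (ρ r₀) +
      (1 / 2) * (Real.log (Δ r₀) - Real.log (B r₀) - Real.log (1 - (u r₀) ^ 2)))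
    exact (mul_eq_zero.mp h.symm).resolve_left hexp.ne'
  have E2 : dρ / ρ r₀ + 1 / r₀ + (1 / 2) * ((2 * r₀ - 2) / Δ r₀) + du / u r₀ -
      (1 / 2) * (-(2 * u r₀ * du) / (1 - (u r₀) ^ 2)) = 0 := by
    have h := hMeq.deriv_eq
    rw [hM'] at h
    rw [hg2.deriv] at h
    have hexp := Real.exp_pos (Real.log (ρ r₀) + Real.log r₀ +
      (1 / 2) * Real.log (Δ r₀) + Real.log (u r₀) - (1 / 2) * Real.log (1 - (u r₀) ^ 2))
    exact (mul_eq_zero.mp h.symm).resolve_left hexp.ne'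
  -- final algebra
  have ha2 : 2 * r₀ ^ 2 - 3 * r₀ + a ^ 2 = Δ r₀ + r₀ * (r₀ - 1) := by
    rw [hΔdef]; ring
  field_simp at E1 E2
  have keyP : ρ r₀ * (2 * Δ r₀ * r₀ * B r₀ * (((u r₀) ^ 2 - c ^ 2) * du)) =
      ρ r₀ * (u r₀ * (1 - (u r₀) ^ 2) *
        (2 * c ^ 2 * B r₀ * (Δ r₀ + r₀ * (r₀ - 1)) +
          r₀ * (dB * Δ r₀ - (2 * r₀ - 2) * B r₀))) := by
    linear_combination (r₀ * u r₀) * E1 - (2 * c ^ 2 * B r₀) * E2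
  have key := mul_left_cancel₀ hρ0.ne' keyP
  rw [ha2]
  have hne : (2 * Δ r₀ * r₀ * B r₀ : ℝ) ≠ 0 := by positivity
  apply mul_left_cancel₀ hne
  calc 2 * Δ r₀ * r₀ * B r₀ * (((u r₀) ^ 2 - c ^ 2) * du)
      = u r₀ * (1 - (u r₀) ^ 2) *
        (2 * c ^ 2 * B r₀ * (Δ r₀ + r₀ * (r₀ - 1)) +
          r₀ * (dB * Δ r₀ - (2 * r₀ - 2) * B r₀)) := by linear_combination key
    _ = 2 * Δ r₀ * r₀ * B r₀ * (u r₀ * (1 - (u r₀) ^ 2) *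
        (c ^ 2 * (Δ r₀ + r₀ * (r₀ - 1)) / (Δ r₀ * r₀) +
          1 / 2 * (dB / B r₀ - (2 * r₀ - 2) / Δ r₀))) := by
        field_simp
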